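/- For b ≥ 1, the generating function for right-skewed (n,b)-domino towers is R_b(x) = (x^b/(1−2x^b)) · Σ_{j=1}^{b} H_j(x) · (Σ_{S ⊆ {j, j+1, ..., b−1}} Π_{k∈S} 2x^k/(1−2x^k)), as formal power series. -/

import Mathlib

/-- `hFun b n` is the number of `(n,b)`-domino stacks, defined by the recurrence
`h_b(n) = Σ_{i=1}^{b} (2(b-i)+1) h_i(n-b)` with `h_b(b) = 1` and `h_b(n) = 0`
when `n < 1`, `b < 1`, or `n < b`. -/
def hFun : ℕ → ℕ → ℕ
  | b, n =>
    if b = 0 ∨ n ≤ b then (if n = b ∧ 1 ≤ b then 1 else 0)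
    else ∑ i ∈ Finset.Icc 1 b, (2 * (b - i) + 1) * hFun i (n - b)
termination_by b n => n
decreasing_by omega

/-- `rFun b n` is the number of right-skewed `(n,b)`-domino towers, defined by the
recurrence `r_b(n) = Σ_{i=1}^{b} (2 r_i(n-b) + h_i(n-b))` with `r_b(b+1) = 1` and
`r_b(n) = 0` for `n < 2`, `b < 1`, or `n < b+1`. -/
def rFun : ℕ → ℕ → ℕ
  | b, n =>
    if b = 0 ∨ n ≤ b + 1 then (if n = b + 1 ∧ 1 ≤ b then 1 else 0)
    else ∑ i ∈ Finset.Icc 1 b, (2 * rFun i (n - b) + hFun i (n - b))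
termination_by b n => n
decreasing_by omega

namespace RightSkewedAux

open PowerSeries Finset

noncomputable def Hs (j : ℕ) : PowerSeries ℚ := PowerSeries.mk fun n => (hFun j n : ℚ)
noncomputable def Rs (b : ℕ) : PowerSeries ℚ := PowerSeries.mk fun n => (rFun b n : ℚ)
noncomputable def F (b : ℕ) : PowerSeries ℚ :=
  ∑ j ∈ Icc 1 b, Hs j * ∏ k ∈ Icc j b, (1 - 2 * X ^ k : PowerSeries ℚ)⁻¹

lemma unit_u {k : ℕ} (hk : 1 ≤ k) :
    (1 - 2 * X ^ k : PowerSeries ℚ) * (1 - 2 * X ^ k : PowerSeries ℚ)⁻¹ = 1 := by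
  apply PowerSeries.mul_inv_cancel
  simp [zero_pow (by omega : k ≠ 0)]

lemma one_add_u {k : ℕ} (hk : 1 ≤ k) :
    1 + 2 * X ^ k * (1 - 2 * X ^ k : PowerSeries ℚ)⁻¹ =
      (1 - 2 * X ^ k : PowerSeries ℚ)⁻¹ := by
  have h := unit_u hk
  calc 1 + 2 * X ^ k * (1 - 2 * X ^ k : PowerSeries ℚ)⁻¹
      = (1 - 2 * X ^ k) * (1 - 2 * X ^ k : PowerSeries ℚ)⁻¹
          + 2 * X ^ k * (1 - 2 * X ^ k : PowerSeries ℚ)⁻¹ := by rw [h]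
    _ = (1 - 2 * X ^ k : PowerSeries ℚ)⁻¹ := by ring

lemma powerset_sum (s : Finset ℕ) (f : ℕ → PowerSeries ℚ) :
    ∑ S ∈ s.powerset, ∏ k ∈ S, f k = ∏ k ∈ s, (1 + f k) := by
  have h := Finset.prod_add f (fun _ => (1 : PowerSeries ℚ)) s
  simp only [Finset.prod_const_one, mul_one] at h
  rw [← h]
  exact Finset.prod_congr rfl fun k _ => add_comm _ _

lemma hFun_le {i n : ℕ} (h : n ≤ i) :
    hFun i n = if n = i ∧ 1 ≤ i then 1 else 0 := by
  rw [hFun, if_pos (Or.inr h)]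

lemma rFun_le {b n : ℕ} (h : n ≤ b + 1) :
    rFun b n = if n = b + 1 ∧ 1 ≤ b then 1 else 0 := by
  rw [rFun, if_pos (Or.inr h)]

lemma rFun_rec {b n : ℕ} (hb : 1 ≤ b) (hn : b ≤ n) :
    rFun b n = ∑ i ∈ Icc 1 b, (2 * rFun i (n - b) + hFun i (n - b)) := by
  rcases le_or_gt n (b + 1) with h | h
  · rw [rFun_le h]
    have hterm : ∀ i ∈ Icc 1 b,
        2 * rFun i (n - b) + hFun i (n - b) = if n - b = i then 1 else 0 := by
      intro i hi
      simp only [Finset.mem_Icc] at hi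
      rw [rFun_le (by omega), hFun_le (by omega), if_neg (by omega)]
      split_ifs <;> omega
    rw [Finset.sum_congr rfl hterm, Finset.sum_ite_eq (Icc 1 b) (n - b) (fun _ => 1)]
    simp only [Finset.mem_Icc]
    split_ifs <;> omega
  · rw [rFun, if_neg (by omega)]

lemma Rs_rec {b : ℕ} (hb : 1 ≤ b) :
    Rs b = X ^ b * ∑ i ∈ Icc 1 b, (2 * Rs i + Hs i) := by
  ext n
  rw [PowerSeries.coeff_X_pow_mul']
  split_ifs with h
  · rw [show (PowerSeries.coeff n) (Rs b) = (rFun b n : ℚ) from coeff_mk _ _,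
      rFun_rec hb h]
    push_cast
    rw [map_sum]
    refine Finset.sum_congr rfl fun i _ => ?_
    simp [Rs, Hs, two_mul, map_add, coeff_mk]
  · simp only [Rs, coeff_mk]
    rw [rFun_le (by omega)]
    norm_num
    omega

lemma Icc_split {j b : ℕ} (hj : j ≤ b) (hb : 1 ≤ b) :
    Icc j b = insert b (Icc j (b - 1)) := by
  ext x
  simp only [Finset.mem_Icc, Finset.mem_insert]
  omega

lemma prod_u_split {j b : ℕ} (hj : j ≤ b) (hb : 1 ≤ b) :
    ∏ k ∈ Icc j b, (1 - 2 * X ^ k : PowerSeries ℚ)⁻¹ =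
      (1 - 2 * X ^ b : PowerSeries ℚ)⁻¹ *
        ∏ k ∈ Icc j (b - 1), (1 - 2 * X ^ k : PowerSeries ℚ)⁻¹ := by
  rw [Icc_split hj hb, Finset.prod_insert (by simp only [Finset.mem_Icc]; omega)]

lemma F_split {b : ℕ} (hb : 1 ≤ b) :
    F b = (1 - 2 * X ^ b : PowerSeries ℚ)⁻¹ * (Hs b + F (b - 1)) := by
  unfold F
  rw [Icc_split hb hb, Finset.sum_insert (by simp only [Finset.mem_Icc]; omega)]
  have h1 : ∏ k ∈ Icc b b, (1 - 2 * X ^ k : PowerSeries ℚ)⁻¹ =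
      (1 - 2 * X ^ b : PowerSeries ℚ)⁻¹ := by simp
  have h2 : ∀ j ∈ Icc 1 (b - 1),
      Hs j * ∏ k ∈ Icc j b, (1 - 2 * X ^ k : PowerSeries ℚ)⁻¹ =
        (1 - 2 * X ^ b : PowerSeries ℚ)⁻¹ *
          (Hs j * ∏ k ∈ Icc j (b - 1), (1 - 2 * X ^ k : PowerSeries ℚ)⁻¹) := by
    intro j hj
    simp only [Finset.mem_Icc] at hj
    rw [prod_u_split (by omega) hb]
    ring
  rw [h1, Finset.sum_congr rfl h2, ← Finset.mul_sum]
  ring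

lemma G_eq_F : ∀ m, ∑ i ∈ Icc 1 m, (2 * X ^ i * F i + Hs i) = F m := by
  intro m
  induction m with
  | zero => simp [F]
  | succ m ih =>
    rw [Icc_split (by omega) (by omega),
      Finset.sum_insert (by simp only [Finset.mem_Icc]; omega)]
    simp only [Nat.add_sub_cancel]
    rw [ih]
    have hF := F_split (b := m + 1) (by omega)
    simp only [Nat.add_sub_cancel] at hF
    have hu := unit_u (k := m + 1) (by omega)
    have hkey : (1 - 2 * X ^ (m + 1)) * F (m + 1) = Hs (m + 1) + F m := by
      rw [hF, ← mul_assoc, hu, one_mul]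
    linear_combination -hkey

lemma Rs_eq : ∀ b, 1 ≤ b → Rs b = X ^ b * F b := by
  intro b
  induction b using Nat.strong_induction_on with
  | _ b ih =>
    intro hb
    have h2 : ∀ i ∈ Icc 1 (b - 1), 2 * Rs i + Hs i = 2 * X ^ i * F i + Hs i := by
      intro i hi
      simp only [Finset.mem_Icc] at hi
      rw [ih i (by omega) (by omega)]
      ring
    have hrec := Rs_rec hb
    rw [Icc_split hb hb, Finset.sum_insert (by simp only [Finset.mem_Icc]; omega),
      Finset.sum_congr rfl h2, G_eq_F (b - 1)] at hrec
    have hu := unit_u (k := b) hb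
    have hHF : Hs b + F (b - 1) = (1 - 2 * X ^ b) * F b := by
      rw [F_split hb, ← mul_assoc, hu, one_mul]
    have hzero : (1 - 2 * X ^ b) * (Rs b - X ^ b * F b) = 0 := by
      linear_combination hrec + X ^ b * hHF
    have hfin : Rs b - X ^ b * F b = 0 := by
      calc Rs b - X ^ b * F b
          = (1 - 2 * X ^ b : PowerSeries ℚ)⁻¹ *
              ((1 - 2 * X ^ b) * (Rs b - X ^ b * F b)) := by
            rw [← mul_assoc, mul_comm ((1 - 2 * X ^ b : PowerSeries ℚ)⁻¹), hu, one_mul]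
        _ = 0 := by rw [hzero, mul_zero]
    exact sub_eq_zero.mp hfin

end RightSkewedAux

open PowerSeries in
/-- For `b ≥ 1`, the generating function for right-skewed `(n,b)`-domino towers is
`R_b(x) = (x^b/(1-2x^b)) Σ_{j=1}^{b} H_j(x) (Σ_{S ⊆ {j,…,b-1}} Π_{k∈S} 2x^k/(1-2x^k))`,
as formal power series. -/
theorem right_skewed_genFun (b : ℕ) (hb : 1 ≤ b) :
    PowerSeries.mk (fun n => (rFun b n : ℚ)) =
      (X : PowerSeries ℚ) ^ b * (1 - 2 * (X : PowerSeries ℚ) ^ b)⁻¹ *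
        ∑ j ∈ Finset.Icc 1 b, PowerSeries.mk (fun n => (hFun j n : ℚ)) *
          ∑ S ∈ (Finset.Icc j (b - 1)).powerset, ∏ k ∈ S,
            (2 * (X : PowerSeries ℚ) ^ k * (1 - 2 * (X : PowerSeries ℚ) ^ k)⁻¹) := by
  open RightSkewedAux Finset in
  have h1 : ∀ j ∈ Icc 1 b,
      PowerSeries.mk (fun n => (hFun j n : ℚ)) *
        ∑ S ∈ (Icc j (b - 1)).powerset, ∏ k ∈ S,
          (2 * (X : PowerSeries ℚ) ^ k * (1 - 2 * (X : PowerSeries ℚ) ^ k)⁻¹) =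
      Hs j * ∏ k ∈ Icc j (b - 1), (1 - 2 * X ^ k : PowerSeries ℚ)⁻¹ := by
    intro j hj
    simp only [Finset.mem_Icc] at hj
    congr 1
    rw [powerset_sum]
    refine Finset.prod_congr rfl fun k hk => ?_
    simp only [Finset.mem_Icc] at hk
    exact one_add_u (by omega)
  rw [Finset.sum_congr rfl h1]
  have h2 : ∀ j ∈ Icc 1 b,
      (1 - 2 * X ^ b : PowerSeries ℚ)⁻¹ *
        (Hs j * ∏ k ∈ Icc j (b - 1), (1 - 2 * X ^ k : PowerSeries ℚ)⁻¹) =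
      Hs j * ∏ k ∈ Icc j b, (1 - 2 * X ^ k : PowerSeries ℚ)⁻¹ := by
    intro j hj
    simp only [Finset.mem_Icc] at hj
    rw [prod_u_split hj.2 hb]
    ring
  calc PowerSeries.mk (fun n => (rFun b n : ℚ)) = Rs b := rfl
    _ = X ^ b * F b := Rs_eq b hb
    _ = X ^ b * ∑ j ∈ Icc 1 b, (1 - 2 * X ^ b : PowerSeries ℚ)⁻¹ *
          (Hs j * ∏ k ∈ Icc j (b - 1), (1 - 2 * X ^ k : PowerSeries ℚ)⁻¹) := by
        rw [Finset.sum_congr rfl h2]; rfl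
    _ = _ := by rw [← Finset.mul_sum]; ring
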